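/- Let q be an odd prime power, G = PGL_2(F_q), A the split torus of order q-1, and c ∈ F_q with c ≠ 1 and c ≠ δ (δ a fixed nonsquare). The double coset A_c = A·[[1,δ-c],[1,1-c]]·A is the disjoint union of the q-1 right cosets [[x, x(δ-c)],[1, 1-c]]·A for x ∈ F_q^×. -/

import Mathlib

open scoped MatrixGroups Pointwise

/-- `PGL₂(F) = GL₂(F)` modulo its center. -/
abbrev PGL2 (F : Type*) [Field F] : Type _ :=
  GL (Fin 2) F ⧸ Subgroup.center (GL (Fin 2) F)

/-- The canonical projection `GL₂(F) → PGL₂(F)`. -/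
def pglProj (F : Type*) [Field F] : GL (Fin 2) F →* PGL2 F :=
  QuotientGroup.mk' _

/-- The subset of `PGL₂(F)` of classes of invertible matrices `!![y, x; z, w]`. -/
def pglSet (F : Type*) [Field F] (y x z w : F) : Set (PGL2 F) :=
  {g | ∃ M : GL (Fin 2) F,
    (↑M : Matrix (Fin 2) (Fin 2) F) = !![y, x; z, w] ∧ g = pglProj F M}

/-- The image in `PGL₂(F)` of the diagonal split torus `A`. -/
def setA (F : Type*) [Field F] : Set (PGL2 F) :=
  {g | ∃ y : F, y ≠ 0 ∧ g ∈ pglSet F y 0 0 1}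

/-- Auxiliary: build an element of `GL₂` from an explicit matrix with nonzero determinant. -/
noncomputable def glmk (F : Type*) [Field F] (y x z w : F) (h : y * w - x * z ≠ 0) :
    GL (Fin 2) F :=
  ((Matrix.isUnit_iff_isUnit_det !![y, x; z, w]).mpr
    (by rw [Matrix.det_fin_two_of]; exact isUnit_iff_ne_zero.mpr h)).unit

@[simp] lemma glmk_coe (F : Type*) [Field F] (y x z w : F) (h : y * w - x * z ≠ 0) :
    ((glmk F y x z w h : GL (Fin 2) F) : Matrix (Fin 2) (Fin 2) F) = !![y, x; z, w] :=
  IsUnit.unit_spec _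

lemma center_is_scalar (F : Type*) [Field F] (Z : GL (Fin 2) F)
    (hZ : Z ∈ Subgroup.center (GL (Fin 2) F)) :
    ∃ a : F, (↑Z : Matrix (Fin 2) (Fin 2) F) = !![a, 0; 0, a] := by
  rw [Subgroup.mem_center_iff] at hZ
  have h1 := congrArg (Units.val) (hZ (glmk F 1 1 0 1 (by norm_num)))
  have h2 := congrArg (Units.val) (hZ (glmk F 1 0 1 1 (by norm_num)))
  rw [Units.val_mul, Units.val_mul, glmk_coe] at h1 h2
  rw [Matrix.eta_fin_two (↑Z : Matrix (Fin 2) (Fin 2) F)] at h1 h2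
  rw [Matrix.mul_fin_two, Matrix.mul_fin_two] at h1 h2
  refine ⟨(↑Z : Matrix (Fin 2) (Fin 2) F) 0 0, ?_⟩
  have e1 := congrFun (congrFun h1 0 : _) 1
  have e2 := congrFun (congrFun h1 1 : _) 1
  have e3 := congrFun (congrFun h2 0 : _) 0
  simp at e1 e2 e3
  have hd : (↑Z : Matrix (Fin 2) (Fin 2) F) 1 1
      = (↑Z : Matrix (Fin 2) (Fin 2) F) 0 0 := by linear_combination e1
  conv_lhs => rw [Matrix.eta_fin_two (↑Z : Matrix (Fin 2) (Fin 2) F)]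
  rw [e2, e3, hd]

lemma mem_pglSet (F : Type*) [Field F] {y x z w : F} (h : y * w - x * z ≠ 0)
    {g : PGL2 F} : g ∈ pglSet F y x z w ↔ g = pglProj F (glmk F y x z w h) := by
  constructor
  · rintro ⟨M, hM, rfl⟩
    have : M = glmk F y x z w h := Units.ext (by rw [hM, glmk_coe])
    rw [this]
  · rintro rfl
    exact ⟨glmk F y x z w h, glmk_coe F y x z w h, rfl⟩

/-- For `c ≠ 1, δ`, the double coset `A_c = A·!![1, δ-c; 1, 1-c]·A` is the disjoint union of
the `q-1` right cosets `!![x, x(δ-c); 1, 1-c]·A`, `x ∈ F_q^×`. -/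
theorem stmt8 (q : ℕ) (hq : IsPrimePow q) (hodd : Odd q)
    (F : Type*) [Field F] [Fintype F] (hF : Fintype.card F = q)
    (δ : F) (hδ : ¬ IsSquare δ) (c : F) (hc1 : c ≠ 1) (hcδ : c ≠ δ) :
    setA F * pglSet F 1 (δ - c) 1 (1 - c) * setA F
      = (⋃ x : Fˣ, pglSet F (x : F) ((x : F) * (δ - c)) 1 (1 - c) * setA F) ∧
    (Set.univ : Set Fˣ).PairwiseDisjoint
      (fun x : Fˣ => pglSet F (x : F) ((x : F) * (δ - c)) 1 (1 - c) * setA F) := by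
  have hδ1 : δ ≠ 1 := fun h => hδ (h ▸ IsSquare.one)
  have h1δ : (1 : F) - δ ≠ 0 := sub_ne_zero.mpr (Ne.symm hδ1)
  have h1c : (1 : F) - c ≠ 0 := sub_ne_zero.mpr (Ne.symm hc1)
  -- determinant facts
  have hdet0 : (1 : F) * (1 - c) - (δ - c) * 1 ≠ 0 := by
    intro h; apply h1δ; linear_combination h
  have hdetA : ∀ u : F, u ≠ 0 → u * 1 - (0 : F) * 0 ≠ 0 := by
    intro u hu; simpa using hu
  constructor
  · ext g
    constructor
    · rintro ⟨p, ⟨g1, ⟨y, hy, M1, hM1, rfl⟩, g2, ⟨M2, hM2, rfl⟩, rfl⟩, g3, hg3, rfl⟩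
      refine Set.mem_iUnion.mpr ⟨Units.mk0 y hy, ?_⟩
      refine Set.mul_mem_mul ⟨M1 * M2, ?_, by simp [pglProj]⟩ hg3
      rw [Units.val_mul, hM1, hM2, Matrix.mul_fin_two]
      norm_num [Units.val_mk0]
    · intro hg
      rcases Set.mem_iUnion.mp hg with ⟨x, g1, ⟨N, hN, rfl⟩, g3, hg3, rfl⟩
      have hx : (x : F) ≠ 0 := x.ne_zero
      have hNeq : N = glmk F (x : F) 0 0 1 (hdetA _ hx) *
          glmk F 1 (δ - c) 1 (1 - c) hdet0 := by
        apply Units.ext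
        rw [Units.val_mul, glmk_coe, glmk_coe, hN, Matrix.mul_fin_two]
        norm_num
      have hmem : pglProj F N ∈ setA F * pglSet F 1 (δ - c) 1 (1 - c) := by
        rw [hNeq, map_mul]
        exact Set.mul_mem_mul
          ⟨(x : F), hx, glmk F (x : F) 0 0 1 (hdetA _ hx), glmk_coe _ _ _ _ _ _, rfl⟩
          ⟨glmk F 1 (δ - c) 1 (1 - c) hdet0, glmk_coe _ _ _ _ _ _, rfl⟩
      exact Set.mul_mem_mul hmem hg3
  · intro x _ x' _ hxx'
    rw [Function.onFun, Set.disjoint_left]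
    rintro g ⟨g1, ⟨N, hN, rfl⟩, g3, ⟨y, hy, M, hM, rfl⟩, rfl⟩
      ⟨g1', ⟨N', hN', rfl⟩, g3', ⟨y', hy', M', hM', rfl⟩, heq⟩
    apply hxx'
    have heq' : pglProj F (N' * M') = pglProj F (N * M) := by
      simpa only [map_mul] using heq
    rcases (QuotientGroup.mk'_eq_mk' (Subgroup.center (GL (Fin 2) F))).mp heq' with ⟨Z, hZc, hZ⟩
    rcases center_is_scalar F Z hZc with ⟨a, ha⟩
    have hmat := congrArg Units.val hZ
    rw [Units.val_mul, Units.val_mul, Units.val_mul, ha, hN, hM, hN', hM',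
      Matrix.mul_fin_two, Matrix.mul_fin_two, Matrix.mul_fin_two] at hmat
    have e11 := congrFun (congrFun hmat 1 : _) 1
    have e10 := congrFun (congrFun hmat 1 : _) 0
    have e00 := congrFun (congrFun hmat 0 : _) 0
    simp at e11 e10 e00
    -- e11 : (1-c)*a = 1-c  (up to arrangement), so a = 1; then y = y' and x*y = x'*y'
    have ha1 : a = 1 := mul_left_cancel₀ h1c (by linear_combination e11)
    rw [ha1, mul_one] at e10 e00
    apply Units.ext
    rw [← e10] at e00
    exact (mul_right_cancel₀ hy' e00).symm
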